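/- Let r be a multivariate real polynomial in m variables, define G(y, u, v) = 1 − (r(y)² + (u² + v² − 1)²), and let M = {(y, u, v) ∈ ℝ^m × ℝ × ℝ | G(y, u, v) ≥ 1} carry the subspace topology. If r has a real root (there exists a ∈ ℝ^m with r(a) = 0), then M is nonempty and M is not simply connected; in particular M contains a loop that is not null-homotopic in M (the loop θ ↦ (a, cos θ, sin θ) is such a loop). -/

import Mathlib

/-- The circle-product function `G(y, u, v) = 1 − (r(y)² + (u² + v² − 1)²)`. -/
noncomputable def circleG (m : ℕ) (r : MvPolynomial (Fin m) ℝ)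
    (p : (Fin m → ℝ) × ℝ × ℝ) : ℝ :=
  1 - ((MvPolynomial.eval p.1 r) ^ 2 + (p.2.1 ^ 2 + p.2.2 ^ 2 - 1) ^ 2)

/-- The super-level set `M = {(y, u, v) | G(y, u, v) ≥ 1}`. -/
noncomputable def circleM (m : ℕ) (r : MvPolynomial (Fin m) ℝ) :
    Set ((Fin m → ℝ) × ℝ × ℝ) :=
  {p | circleG m r p ≥ 1}

open scoped unitInterval

noncomputable section Stmt14Aux

namespace Stmt14Aux

local instance : Fact ((0:ℝ) < 1) := ⟨one_pos⟩

local instance : Fact ((0:ℝ) < 1) := ⟨one_pos⟩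

/-- An integer-valued continuous real function on a preconnected space is constant. -/
lemma intconst {X : Type*} [TopologicalSpace X] [PreconnectedSpace X]
    {f : X → ℝ} (hf : Continuous f) (hint : ∀ x, ∃ n : ℤ, f x = n) (x y : X) :
    f x = f y := by
  have hlc : IsLocallyConstant f := by
    rw [IsLocallyConstant.iff_exists_open]
    intro x
    refine ⟨f ⁻¹' Metric.ball (f x) 1, hf.isOpen_preimage _ Metric.isOpen_ball,
      by simp, ?_⟩
    intro y hy
    obtain ⟨n, hn⟩ := hint y
    obtain ⟨m, hm⟩ := hint x
    have hd : |(n:ℝ) - (m:ℝ)| < 1 := by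
      have := Metric.mem_ball.1 hy
      rw [Real.dist_eq, hn, hm] at this
      exact this
    have h2 : |((n - m : ℤ) : ℝ)| < 1 := by push_cast; exact hd
    have h3 : |n - m| < 1 := by exact_mod_cast h2
    have h4 := abs_lt.1 h3
    have : n = m := by omega
    rw [hn, hm, this]
  exact hlc.apply_eq_of_preconnectedSpace x y

lemma half_ne_zero' : (((-(1/2) : ℝ)) : AddCircle (1:ℝ)) ≠ 0 := by
  intro hcontra
  obtain ⟨n, hn⟩ := (AddCircle.coe_eq_zero_iff (p := (1:ℝ))).1 hcontra
  rw [zsmul_eq_mul, mul_one] at hn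
  have h2 : (2 * n : ℤ) = (-1 : ℤ) := by
    have : (2 * (n:ℝ)) = -1 := by linarith
    exact_mod_cast this
  omega

/-- Homotopy lifting by hand: every continuous map from the square to the circle
`ℝ / ℤ` lifts to a continuous real-valued map. -/
lemma circle_lift (F : C(I × I, AddCircle (1:ℝ))) :
    ∃ G : I × I → ℝ, Continuous G ∧ ∀ z, ((G z : ℝ) : AddCircle (1:ℝ)) = F z := by
  classical
  set A := AddCircle (1:ℝ)
  set e := AddCircle.equivIco (1:ℝ) (-(1/2)) with he
  set δ : A → ℝ := fun w => (e w : ℝ) with hδ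
  have hδcoe : ∀ w : A, ((δ w : ℝ) : A) = w := fun w => e.symm_apply_apply w
  -- the "bad set" of pairs whose difference is the antipode of 0
  set D : Set ((I × I) × (I × I)) :=
      (fun q : (I × I) × (I × I) => F q.1 - F q.2) ⁻¹' {(((-(1/2):ℝ)) : A)} with hD
  haveI : T2Space A := (AddCircle.homeomorphCircle one_ne_zero).symm.t2Space
  have hDclosed : IsClosed D :=
    isClosed_singleton.preimage ((F.continuous.comp continuous_fst).sub
      (F.continuous.comp continuous_snd))
  have hdiag : ∀ q ∈ D, q.1 ≠ q.2 := by
    intro q hq heq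
    rw [Set.mem_preimage, Set.mem_singleton_iff, heq, sub_self] at hq
    exact half_ne_zero' hq.symm
  obtain ⟨δ₀, hδ₀, hsafe⟩ : ∃ δ₀ > 0, ∀ u w : I × I, dist u w < δ₀ →
      F u - F w ≠ (((-(1/2):ℝ)) : A) := by
    rcases D.eq_empty_or_nonempty with hDe | hDe
    · refine ⟨1, one_pos, fun u w _ hm => ?_⟩
      have : ((u, w) : (I × I) × (I × I)) ∈ D := by
        rw [hD, Set.mem_preimage, Set.mem_singleton_iff]; exact hm
      rw [hDe] at this; exact this
    · have hcpt : IsCompact D := hDclosed.isCompact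
      obtain ⟨q, hqD, hq⟩ := hcpt.exists_isMinOn hDe
        ((continuous_fst.dist continuous_snd).continuousOn)
      refine ⟨dist q.1 q.2, dist_pos.2 (hdiag q hqD), fun u w hlt hm => ?_⟩
      have hmem : ((u, w) : (I × I) × (I × I)) ∈ D := by
        rw [hD, Set.mem_preimage, Set.mem_singleton_iff]; exact hm
      exact not_le.2 hlt ((isMinOn_iff.1 hq) (u, w) hmem)
  obtain ⟨N, hN⟩ := exists_nat_one_div_lt hδ₀
  set n : ℕ := N + 1 with hn
  have hn0 : (0:ℝ) < n := by positivity
  have hnδ : 1 / (n:ℝ) < δ₀ := by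
    rw [hn]; push_cast; exact hN
  set c : ℕ → ℝ := fun k => min ((k:ℝ)/n) 1 with hc
  have hc0 : c 0 = 0 := by simp [hc]
  have hcn : c n = 1 := by simp [hc, div_self hn0.ne']
  have hcmem : ∀ k, c k ∈ Set.Icc (0:ℝ) 1 :=
    fun k => ⟨le_min (by positivity) zero_le_one, min_le_right _ _⟩
  have hcast : ∀ k : ℕ, ((k+1:ℕ):ℝ) = (k:ℝ)+1 := by intro k; push_cast; ring
  have hcmono : ∀ k, c k ≤ c (k+1) := by
    intro k
    apply min_le_min _ le_rfl
    rw [hcast k]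
    exact (div_le_div_iff_of_pos_right hn0).2 (by linarith)
  have hcstep : ∀ k, c (k+1) - c k ≤ 1/n := by
    intro k
    have hadd : ((k:ℝ)+1)/n = (k:ℝ)/n + 1/n := by ring
    rcases le_total ((k:ℝ)/n) 1 with hle | hle
    · have h1 : c k = (k:ℝ)/n := min_eq_left hle
      have h2 : c (k+1) ≤ (k:ℝ)/n + 1/n := by
        have h3 : c (k+1) ≤ ((k+1:ℕ):ℝ)/n := min_le_left _ _
        rw [hcast k] at h3
        linarith [h3, hadd]
      linarith
    · have h1 : c k = 1 := min_eq_right hle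
      have h2 : c (k+1) ≤ 1 := min_le_right _ _
      have h3 : 0 < 1/(n:ℝ) := by positivity
      linarith
  have hmulmem : ∀ (k:ℕ) (s : I), c k * (s:ℝ) ∈ unitInterval :=
    fun k s => unitInterval.mul_mem (hcmem k) s.2
  set ρ : ℕ → I × I → I × I := fun k z =>
    (⟨c k * (z.1:ℝ), hmulmem k z.1⟩, ⟨c k * (z.2:ℝ), hmulmem k z.2⟩) with hρ
  have hρcont : ∀ k, Continuous (ρ k) := fun k =>
    ((continuous_const.mul (continuous_subtype_val.comp continuous_fst)).subtype_mk _).prodMk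
      ((continuous_const.mul (continuous_subtype_val.comp continuous_snd)).subtype_mk _)
  have hρ0 : ∀ z, ρ 0 z = ((0:I), (0:I)) := by
    intro z
    refine Prod.ext (Subtype.ext ?_) (Subtype.ext ?_) <;> simp [hρ, hc0]
  have hρn : ∀ z, ρ n z = z := by
    intro z
    refine Prod.ext (Subtype.ext ?_) (Subtype.ext ?_) <;> simp [hρ, hcn]
  have hIdist : ∀ (k:ℕ) (s : I), dist (c (k+1) * (s:ℝ)) (c k * (s:ℝ)) ≤ 1/n := by
    intro k s
    rw [Real.dist_eq, ← sub_mul, abs_mul]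
    have h1 : |c (k+1) - c k| ≤ 1/n := by
      rw [abs_of_nonneg (by linarith [hcmono k])]
      exact hcstep k
    have h2 : |(s:ℝ)| ≤ 1 := by
      rw [abs_of_nonneg s.2.1]; exact s.2.2
    calc |c (k+1) - c k| * |(s:ℝ)| ≤ (1/n) * 1 := by
          exact mul_le_mul h1 h2 (abs_nonneg _) (by positivity)
      _ = 1/n := mul_one _
  have hρdist : ∀ (k:ℕ) (z : I × I), dist (ρ (k+1) z) (ρ k z) < δ₀ := by
    intro k z
    rw [Prod.dist_eq]
    apply lt_of_le_of_lt (max_le ?_ ?_) hnδ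
    · show dist ((ρ (k+1) z).1) ((ρ k z).1) ≤ 1/(n:ℝ)
      rw [Subtype.dist_eq]
      exact hIdist k z.1
    · show dist ((ρ (k+1) z).2) ((ρ k z).2) ≤ 1/(n:ℝ)
      rw [Subtype.dist_eq]
      exact hIdist k z.2
  have hsafe' : ∀ (k:ℕ) (z : I × I),
      F (ρ (k+1) z) - F (ρ k z) ≠ (((-(1/2):ℝ)) : A) :=
    fun k z => hsafe _ _ (hρdist k z)
  set G0 : I × I → ℝ := fun z => ∑ k ∈ Finset.range n, δ (F (ρ (k+1) z) - F (ρ k z)) with hG0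
  have hG0cont : Continuous G0 := by
    apply continuous_finset_sum
    intro k _
    rw [continuous_iff_continuousAt]
    intro z
    have h2 : ContinuousAt (fun w : I × I => F (ρ (k+1) w) - F (ρ k w)) z :=
      ContinuousAt.sub ((F.continuous.comp (hρcont (k+1))).continuousAt)
        ((F.continuous.comp (hρcont k)).continuousAt)
    have h1 : ContinuousAt (e : AddCircle (1:ℝ) → Set.Ico (-(1/2):ℝ) (-(1/2)+1))
        (F (ρ (k+1) z) - F (ρ k z)) :=
      AddCircle.continuousAt_equivIco (1:ℝ) (-(1/2)) (hsafe' k z)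
    have h3 : ContinuousAt (e ∘ fun w : I × I => F (ρ (k+1) w) - F (ρ k w)) z :=
      ContinuousAt.comp (x := z) h1 h2
    have h4 := ContinuousAt.comp (x := z)
      (continuousAt_subtype_val (p := fun y : ℝ => y ∈ Set.Ico (-(1/2):ℝ) (-(1/2)+1))) h3
    exact h4
  refine ⟨fun z => δ (F ((0:I), (0:I))) + G0 z, continuous_const.add hG0cont, ?_⟩
  intro z
  have hq : ∀ x : ℝ, ((x : ℝ) : A) = QuotientAddGroup.mk' (AddSubgroup.zmultiples (1:ℝ)) x :=
    fun x => rfl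
  rw [hq, map_add, map_sum]
  simp only [← hq, hδcoe]
  rw [Finset.sum_range_sub (fun k => F (ρ k z)), hρn, hρ0]
  abel


lemma mem_circleM_iff {m : ℕ} {r : MvPolynomial (Fin m) ℝ} {p : (Fin m → ℝ) × ℝ × ℝ} :
    p ∈ circleM m r ↔ MvPolynomial.eval p.1 r = 0 ∧ p.2.1 ^ 2 + p.2.2 ^ 2 = 1 := by
  unfold circleM circleG
  simp only [Set.mem_setOf_eq, ge_iff_le]
  constructor
  · intro hle
    have h1 : (MvPolynomial.eval p.1 r) ^ 2 = 0 := by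
      nlinarith [sq_nonneg (MvPolynomial.eval p.1 r), sq_nonneg (p.2.1 ^ 2 + p.2.2 ^ 2 - 1)]
    have h2 : (p.2.1 ^ 2 + p.2.2 ^ 2 - 1) ^ 2 = 0 := by
      nlinarith [sq_nonneg (MvPolynomial.eval p.1 r), sq_nonneg (p.2.1 ^ 2 + p.2.2 ^ 2 - 1)]
    refine ⟨sq_eq_zero_iff.1 h1, ?_⟩
    have := sq_eq_zero_iff.1 h2
    linarith [sub_eq_zero.1 this]
  · rintro ⟨h1, h2⟩
    rw [h1, h2]
    norm_num

section Main

variable {m : ℕ} {r : MvPolynomial (Fin m) ℝ} {a : Fin m → ℝ}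

/-- the circle coordinate of a point of `M`, as an element of `Circle`. -/
def cM (m : ℕ) (r : MvPolynomial (Fin m) ℝ) (p : circleM m r) : Circle :=
  ⟨(p.1.2.1 : ℂ) + (p.1.2.2 : ℂ) * Complex.I, by
    show _ ∈ Metric.sphere (0:ℂ) 1
    rw [mem_sphere_zero_iff_norm, Complex.norm_add_mul_I,
      (mem_circleM_iff.1 p.2).2, Real.sqrt_one]⟩

lemma cM_continuous : Continuous (cM m r) := by
  apply Continuous.subtype_mk
  exact ((Complex.continuous_ofReal.comp
      ((continuous_fst.comp continuous_snd).comp continuous_subtype_val)).add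
    ((Complex.continuous_ofReal.comp
      ((continuous_snd.comp continuous_snd).comp continuous_subtype_val)).mul continuous_const))


end Main

end Stmt14Aux

end Stmt14Aux

attribute [local instance] Path.Homotopic.setoid

open Stmt14Aux in
/-- if `r` has a real root `a`, then `M` is nonempty, `M` (with
the subspace topology) is not simply connected, and in particular `M` contains
a loop that is not null-homotopic in `M` — namely the loop
`θ ↦ (a, cos θ, sin θ)` (parametrised over the unit interval as
`t ↦ (a, cos (2πt), sin (2πt))`). -/
theorem stmt14 (m : ℕ) (r : MvPolynomial (Fin m) ℝ)
    (a : Fin m → ℝ) (h : MvPolynomial.eval a r = 0) :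
    (circleM m r).Nonempty ∧
    ¬SimplyConnectedSpace (circleM m r) ∧
    ∃ (x : circleM m r) (γ : Path x x),
      (∀ t : unitInterval,
        (γ t : (Fin m → ℝ) × ℝ × ℝ) =
          (a, Real.cos (2 * Real.pi * t), Real.sin (2 * Real.pi * t))) ∧
      ¬γ.Homotopic (Path.refl x) := by
  have hmem : ∀ θ : ℝ, (a, Real.cos θ, Real.sin θ) ∈ circleM m r := by
    intro θ
    rw [mem_circleM_iff]
    exact ⟨h, Real.cos_sq_add_sin_sq θ⟩
  have hx : ((a, (1:ℝ), (0:ℝ))) ∈ circleM m r := by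
    rw [mem_circleM_iff]; exact ⟨h, by norm_num⟩
  set x : circleM m r := ⟨(a, 1, 0), hx⟩ with hxdef
  set γ : Path x x :=
    { toFun := fun t => ⟨(a, Real.cos (2 * Real.pi * t), Real.sin (2 * Real.pi * t)), hmem _⟩
      continuous_toFun := by
        apply Continuous.subtype_mk
        refine continuous_const.prodMk (Continuous.prodMk ?_ ?_)
        · exact Real.continuous_cos.comp (continuous_const.mul continuous_subtype_val)
        · exact Real.continuous_sin.comp (continuous_const.mul continuous_subtype_val)
      source' := by
        apply Subtype.ext
        simp [hxdef]
      target' := by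
        apply Subtype.ext
        simp [Real.cos_two_pi, Real.sin_two_pi, hxdef] } with hγdef
  have key : ¬ γ.Homotopic (Path.refl x) := by
    rintro ⟨H⟩
    set hc := AddCircle.homeomorphCircle (one_ne_zero : (1:ℝ) ≠ 0) with hhc
    set F : C(I × I, AddCircle (1:ℝ)) :=
      ⟨fun z => hc.symm (cM m r (H z)),
        hc.symm.continuous.comp (cM_continuous.comp H.continuous)⟩ with hF
    obtain ⟨G, hGcont, hGlift⟩ := circle_lift F
    have hq : ∀ y : ℝ, ((y : ℝ) : AddCircle (1:ℝ)) =
        QuotientAddGroup.mk' (AddSubgroup.zmultiples (1:ℝ)) y := fun _ => rfl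
    have hexp : ∀ t : ℝ, hc ((t : ℝ) : AddCircle (1:ℝ)) = Circle.exp (2 * Real.pi * t) := by
      intro t
      rw [hhc, AddCircle.homeomorphCircle_apply, AddCircle.toCircle_apply_mk]
      norm_num
    have hcMγ : ∀ t : I, cM m r (γ t) = Circle.exp (2 * Real.pi * (t:ℝ)) := by
      intro t
      apply Circle.ext
      show (↑(Real.cos (2 * Real.pi * (t:ℝ))) + ↑(Real.sin (2 * Real.pi * (t:ℝ))) * Complex.I : ℂ)
        = _
      rw [Circle.coe_exp, Complex.exp_mul_I, ← Complex.ofReal_cos, ← Complex.ofReal_sin]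
    have hcMx : cM m r x = 1 := by
      apply Circle.ext
      show ((1:ℝ) : ℂ) + ((0:ℝ) : ℂ) * Complex.I = _
      rw [Circle.coe_one]
      norm_num
    have hsymm1 : hc.symm 1 = 0 := by
      have h10 : hc 0 = 1 := by
        rw [hhc, AddCircle.homeomorphCircle_apply, AddCircle.toCircle_zero]
      rw [← h10, Homeomorph.symm_apply_apply]
    have hF0 : ∀ t : I, F (0, t) = (((t:ℝ) : ℝ) : AddCircle (1:ℝ)) := by
      intro t
      show hc.symm (cM m r (H (0, t))) = _
      rw [H.apply_zero]
      rw [show γ.toContinuousMap t = γ t from rfl, hcMγ t, ← hexp (t:ℝ),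
        Homeomorph.symm_apply_apply]
    have hF1 : ∀ t : I, F (1, t) = 0 := by
      intro t
      show hc.symm (cM m r (H (1, t))) = _
      rw [H.apply_one]
      rw [show (Path.refl x).toContinuousMap t = x from rfl, hcMx, hsymm1]
    have hFs0 : ∀ s : I, F (s, 0) = 0 := by
      intro s
      show hc.symm (cM m r (H (s, 0))) = _
      rw [H.eq_fst s (Set.mem_insert _ _)]
      rw [show γ.toContinuousMap 0 = γ 0 from rfl, γ.source, hcMx, hsymm1]
    have hFs1 : ∀ s : I, F (s, 1) = 0 := by
      intro s
      show hc.symm (cM m r (H (s, 1))) = _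
      rw [H.eq_fst s (Set.mem_insert_of_mem _ rfl)]
      rw [show γ.toContinuousMap 1 = γ 1 from rfl, γ.target, hcMx, hsymm1]
    have hint0 : ∀ w : I × I, F w = 0 → ∃ k : ℤ, G w = k := by
      intro w hw
      have h0 : ((G w : ℝ) : AddCircle (1:ℝ)) = 0 := by rw [hGlift w, hw]
      obtain ⟨k, hk⟩ := (AddCircle.coe_eq_zero_iff _).1 h0
      rw [zsmul_eq_mul, mul_one] at hk
      exact ⟨k, hk.symm⟩
    -- edge (0,·): winding 1
    have e1 : G (0, 0) - ((0:I):ℝ) = G (0, 1) - ((1:I):ℝ) := by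
      apply intconst (f := fun t : I => G (0, t) - (t:ℝ))
      · exact (hGcont.comp (continuous_const.prodMk continuous_id)).sub continuous_subtype_val
      · intro t
        have h0 : ((G (0, t) - (t:ℝ) : ℝ) : AddCircle (1:ℝ)) = 0 := by
          rw [hq, map_sub, ← hq, ← hq, hGlift (0, t), hF0 t, sub_self]
        obtain ⟨k, hk⟩ := (AddCircle.coe_eq_zero_iff _).1 h0
        rw [zsmul_eq_mul, mul_one] at hk
        exact ⟨k, hk.symm⟩
    have e2 : G (0, 0) = G (1, 0) := by
      apply intconst (f := fun s : I => G (s, 0))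
      · exact hGcont.comp (continuous_id.prodMk continuous_const)
      · exact fun s => hint0 (s, 0) (hFs0 s)
    have e3 : G (0, 1) = G (1, 1) := by
      apply intconst (f := fun s : I => G (s, 1))
      · exact hGcont.comp (continuous_id.prodMk continuous_const)
      · exact fun s => hint0 (s, 1) (hFs1 s)
    have e4 : G (1, 0) = G (1, 1) := by
      apply intconst (f := fun t : I => G (1, t))
      · exact hGcont.comp (continuous_const.prodMk continuous_id)
      · exact fun t => hint0 (1, t) (hF1 t)
    have hc0 : ((0:I):ℝ) = 0 := rfl
    have hc1 : ((1:I):ℝ) = 1 := rfl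
    rw [hc0, hc1] at e1
    linarith
  refine ⟨⟨(a, 1, 0), hx⟩, ?_, x, γ, fun t => rfl, key⟩
  intro hSC
  haveI := hSC
  exact key (SimplyConnectedSpace.paths_homotopic γ (Path.refl x))
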